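/- arXiv:1907.09804 — 2 statements merged into one kernel-verified Lean document; each statement's English description precedes it below -/
import Mathlib

section
/- Let R̂ : ℝ → ℝ^{3×3} be a differentiable curve satisfying the modified observer equation dR̂/dt = R̂ S − k_e R̂(R̂ᵀR̂ − I), where S(t) is a skew-symmetric matrix for each t and k_e > 0. Then the function V₁(t) = ‖R̂(t)ᵀR̂(t) − I‖² (squared Frobenius norm) satisfies dV₁/dt = −4 k_e ‖R̂(R̂ᵀR̂ − I)‖². -/
open Matrix

attribute [local instance] Matrix.frobeniusNormedAddCommGroup Matrix.frobeniusNormedSpace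
attribute [local instance] Matrix.frobeniusNormedRing Matrix.frobeniusNormedAlgebra

theorem V1_deriv_modified_observer (k_e : ℝ) (hk : 0 < k_e)
    (R : ℝ → Matrix (Fin 3) (Fin 3) ℝ) (S : ℝ → Matrix (Fin 3) (Fin 3) ℝ)
    (hS : ∀ t, (S t)ᵀ = -(S t))
    (hR : ∀ t, HasDerivAt R (R t * S t - k_e • (R t * ((R t)ᵀ * R t - 1))) t) :
    ∀ t, HasDerivAt
      (fun t => Matrix.trace ((((R t)ᵀ * R t - 1)ᵀ) * ((R t)ᵀ * R t - 1)))
      (-4 * k_e *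
        Matrix.trace ((R t * ((R t)ᵀ * R t - 1))ᵀ * (R t * ((R t)ᵀ * R t - 1)))) t := by
  intro t
  classical
  set A := R t with hA
  set St := S t with hSt
  set E : Matrix (Fin 3) (Fin 3) ℝ := Aᵀ * A - 1 with hE
  set D : Matrix (Fin 3) (Fin 3) ℝ := A * St - k_e • (A * E) with hD
  have hRt : HasDerivAt R D t := hR t
  -- transpose as continuous linear map
  let T : Matrix (Fin 3) (Fin 3) ℝ →L[ℝ] Matrix (Fin 3) (Fin 3) ℝ :=
    LinearMap.toContinuousLinearMap
      ((Matrix.transposeLinearEquiv (Fin 3) (Fin 3) ℝ ℝ).toLinearMap)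
  have hRT : HasDerivAt (fun s => (R s)ᵀ) Dᵀ t := by
    have h := T.hasFDerivAt.comp_hasDerivAt t hRt
    exact h
  have hG : HasDerivAt (fun s => (R s)ᵀ * R s) (Dᵀ * A + Aᵀ * D) t := hRT.mul hRt
  have hEd : HasDerivAt (fun s => (R s)ᵀ * R s - 1) (Dᵀ * A + Aᵀ * D) t := hG.sub_const 1
  have hET : HasDerivAt (fun s => ((R s)ᵀ * R s - 1)ᵀ) (Dᵀ * A + Aᵀ * D)ᵀ t := by
    have h := T.hasFDerivAt.comp_hasDerivAt t hEd
    exact h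
  have hprod : HasDerivAt (fun s => ((R s)ᵀ * R s - 1)ᵀ * ((R s)ᵀ * R s - 1))
      ((Dᵀ * A + Aᵀ * D)ᵀ * E + Eᵀ * (Dᵀ * A + Aᵀ * D)) t := hET.mul hEd
  let Tr : Matrix (Fin 3) (Fin 3) ℝ →L[ℝ] ℝ :=
    LinearMap.toContinuousLinearMap (Matrix.traceLinearMap (Fin 3) ℝ ℝ)
  have htr : HasDerivAt (fun s => Matrix.trace (((R s)ᵀ * R s - 1)ᵀ * ((R s)ᵀ * R s - 1)))
      (Matrix.trace ((Dᵀ * A + Aᵀ * D)ᵀ * E + Eᵀ * (Dᵀ * A + Aᵀ * D))) t := by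
    have h := Tr.hasFDerivAt.comp_hasDerivAt t hprod
    exact h
  convert htr using 1
  -- now prove the trace identity
  have hEsym : Eᵀ = E := by
    simp [hE, transpose_sub, transpose_mul]
  have hDT : Dᵀ = -(St * Aᵀ) - k_e • (E * Aᵀ) := by
    simp [hD, transpose_sub, transpose_mul, transpose_smul, hS t, hEsym]
    rw [show Stᵀ = -St from hS t, Matrix.neg_mul]
  set G : Matrix (Fin 3) (Fin 3) ℝ := Aᵀ * A with hGdef
  have hcomm : E * G = G * E := by
    have hGE : G = E + 1 := by simp [hE]
    rw [hGE, mul_add, add_mul, mul_one, one_mul]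
  have hsum : (Dᵀ * A + Aᵀ * D)ᵀ = Dᵀ * A + Aᵀ * D := by
    simp [transpose_add, transpose_mul, add_comm]
  rw [hsum, hEsym]
  rw [trace_add, trace_mul_comm ((Dᵀ * A + Aᵀ * D)) E]
  have expand : Matrix.trace (E * (Dᵀ * A + Aᵀ * D))
      = Matrix.trace (E * (G * St)) - Matrix.trace (E * (St * G))
        - k_e * Matrix.trace (E * (E * G)) - k_e * Matrix.trace (E * (G * E)) := by
    rw [hDT, hD]
    simp only [Matrix.sub_mul, Matrix.mul_sub, Matrix.add_mul, Matrix.mul_add,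
      Matrix.neg_mul, Matrix.mul_neg, Matrix.smul_mul, Matrix.mul_smul,
      trace_add, trace_sub, trace_neg, trace_smul, smul_eq_mul, hGdef, mul_assoc]
    ring
  have t1 : Matrix.trace (E * (St * G)) = Matrix.trace (E * (G * St)) := by
    rw [← mul_assoc, trace_mul_comm, ← mul_assoc, ← hcomm, mul_assoc]
  have t2 : Matrix.trace (E * (E * G)) = Matrix.trace (E * (G * E)) := by
    rw [hcomm]
  have t3 : Matrix.trace ((A * E)ᵀ * (A * E)) = Matrix.trace (E * (G * E)) := by
    rw [transpose_mul, hEsym, mul_assoc, ← mul_assoc Aᵀ, ← hGdef, ← mul_assoc]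
  rw [expand, t1, t2, t3]
  ring
end

section
/- Let R̃ : ℝ → SO(3) satisfy the error dynamics dR̃/dt = [R̃, Ω_×] − k_P ω_× R̃ with ω = vex(P_a(R̃)), k_P > 0, and Ω(t) bounded. Then V(t) = ¼‖I − R̃(t)‖²_F satisfies dV/dt = −k_P ‖ω(t)‖² ≤ 0. -/
open Matrix

attribute [local instance] Matrix.frobeniusNormedAddCommGroup Matrix.frobeniusNormedSpace

/-- The hat map sending `v ∈ ℝ³` to the skew-symmetric matrix `v_×`. -/
def hat (v : Fin 3 → ℝ) : Matrix (Fin 3) (Fin 3) ℝ :=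
  !![0, -v 2, v 1;
     v 2, 0, -v 0;
     -v 1, v 0, 0]

/-- Skew-symmetric (anti-symmetric) projection. -/
noncomputable def Pa (A : Matrix (Fin 3) (Fin 3) ℝ) : Matrix (Fin 3) (Fin 3) ℝ :=
  (1 / 2 : ℝ) • (A - Aᵀ)

/-- The inverse of the hat map. -/
def vex (A : Matrix (Fin 3) (Fin 3) ℝ) : Fin 3 → ℝ :=
  ![A 2 1, A 0 2, A 1 0]

theorem lyapunov_decrease_error_dynamics (k_P : ℝ) (hk : 0 < k_P)
    (Ω : ℝ → Fin 3 → ℝ) (hΩbdd : ∃ M : ℝ, ∀ t, ‖Ω t‖ ≤ M)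
    (R : ℝ → Matrix (Fin 3) (Fin 3) ℝ)
    (hSO3 : ∀ t, (R t)ᵀ * R t = 1 ∧ (R t).det = 1)
    (ω : ℝ → Fin 3 → ℝ) (hω : ∀ t, ω t = vex (Pa (R t)))
    (hdyn : ∀ t, HasDerivAt R
      (R t * hat (Ω t) - hat (Ω t) * R t - k_P • (hat (ω t) * R t)) t) :
    ∀ t, HasDerivAt
      (fun t => (1 / 4 : ℝ) * Matrix.trace ((1 - R t)ᵀ * (1 - R t)))
      (-k_P * (ω t ⬝ᵥ ω t)) t := by
  intro t
  -- trace as a continuous linear map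
  let T : Matrix (Fin 3) (Fin 3) ℝ →L[ℝ] ℝ :=
    LinearMap.toContinuousLinearMap (Matrix.traceLinearMap (Fin 3) ℝ ℝ)
  have htr : HasDerivAt (fun s => Matrix.trace (R s))
      (Matrix.trace (R t * hat (Ω t) - hat (Ω t) * R t - k_P • (hat (ω t) * R t))) t := by
    have := T.hasFDerivAt.comp_hasDerivAt t (hdyn t)
    exact this
  have h1 : HasDerivAt (fun s => (3/2 : ℝ) - (1/2) * Matrix.trace (R s))
      (-(1/2) * Matrix.trace (R t * hat (Ω t) - hat (Ω t) * R t - k_P • (hat (ω t) * R t))) t := by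
    simpa [neg_mul] using (htr.const_mul (1/2 : ℝ)).const_sub (3/2 : ℝ)
  have heq : (fun s => (1 / 4 : ℝ) * Matrix.trace ((1 - R s)ᵀ * (1 - R s)))
      = fun s => (3/2 : ℝ) - (1/2) * Matrix.trace (R s) := by
    funext s
    have h := (hSO3 s).1
    have : Matrix.trace ((1 - R s)ᵀ * (1 - R s)) = 6 - 2 * Matrix.trace (R s) := by
      have : (1 - R s)ᵀ * (1 - R s) = 1 - R s - (R s)ᵀ + (R s)ᵀ * R s := by
        simp only [Matrix.transpose_sub, Matrix.transpose_one, sub_mul, mul_sub, mul_one,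
          one_mul]
        abel
      rw [this, h]
      simp [Matrix.trace_add, Matrix.trace_sub, Matrix.trace_one, Matrix.trace_transpose]
      ring
    rw [this]; ring
  rw [heq]
  have hval : -(1/2 : ℝ) * Matrix.trace (R t * hat (Ω t) - hat (Ω t) * R t - k_P • (hat (ω t) * R t))
      = -k_P * (ω t ⬝ᵥ ω t) := by
    have hcomm : Matrix.trace (R t * hat (Ω t)) = Matrix.trace (hat (Ω t) * R t) :=
      Matrix.trace_mul_comm _ _
    rw [Matrix.trace_sub, Matrix.trace_sub, Matrix.trace_smul, hcomm]
    have hω' : ω t = vex (Pa (R t)) := hω t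
    have : Matrix.trace (hat (ω t) * R t) = -2 * (ω t ⬝ᵥ ω t) := by
      rw [hω']
      simp [hat, vex, Pa, Matrix.trace, Matrix.mul_apply, Matrix.vecMul, Fin.sum_univ_succ,
        dotProduct, Matrix.vecHead, Matrix.vecTail]
      ring
    rw [this]; simp [smul_eq_mul]; ring
  rw [← hval]
  exact h1
end
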